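/- Under the plethysm p_t' = (q₁^t - 1)·p_t in the ring Λ = ℚ(q₁,q₂)[p₁,p₂,…] of symmetric functions, defining h_t' by the generating function identity 1 + ∑_{t≥1} h_t' x^{-t} = exp(∑_{t≥1} p_t' /(t x^t)), one has the identity h_t = ∑_{ε₁,…,ε_{t-1} ∈ {0,1}} q₁^{∑_{s: ε_s = 0} s} / ((q₁-1)(q₁²-1)⋯(q₁^t-1)) · s'_{(ε₁…ε_{t-1})}, where s'_ε are the ribbon skew Schur functions in the variables p_t' determined by s'_{(0^{t-1})} = h_t' and the multiplication rule s'_ε s'_{ε'} = s'_{ε0ε'} + s'_{ε1ε'}. -/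

import Mathlib

/- STATEMENT 5: in Λ = ℚ(q₁,q₂)[p₁,p₂,…], with h_t defined by
1 + ∑ h_t x^{-t} = exp(∑ p_t/(t xᵗ)), p'_t = (q₁ᵗ-1)p_t, h'_t defined by the
same generating identity from the p'_t, and s'_ε (ε a binary string) the ribbon
skew Schur functions of the plethysm, determined by s'_{(0^{t-1})} = h'_t and
s'_ε s'_{ε'} = s'_{ε0ε'} + s'_{ε1ε'}, one has for all t ≥ 1:
  h_t = ∑_{ε ∈ {0,1}^{t-1}} q₁^{∑_{s : ε_s = 0} s} / ((q₁-1)⋯(q₁ᵗ-1)) · s'_ε.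
The generating identities are encoded via their unique characterization in
characteristic zero: constant term 1 and H' = P'·H. -/

noncomputable section

abbrev K1 : Type := FractionRing (MvPolynomial (Fin 2) ℚ)

noncomputable def q₁ : K1 := algebraMap (MvPolynomial (Fin 2) ℚ) K1 (MvPolynomial.X 0)

abbrev Lam : Type := MvPolynomial ℕ K1

/-- the power sum p_t (t ≥ 1) -/
noncomputable def pp (t : ℕ) : Lam := MvPolynomial.X t

/-- the plethystically modified power sum p'_t = (q₁ᵗ - 1) p_t -/
noncomputable def pp' (t : ℕ) : Lam := MvPolynomial.C (q₁ ^ t - 1) * pp t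

/- ### Auxiliary material -/

/-- uniqueness of solutions of a linear ODE for power series over `Lam` -/
lemma ode_unique (Q F G : PowerSeries Lam)
    (h0 : PowerSeries.constantCoeff F = PowerSeries.constantCoeff G)
    (hF : PowerSeries.derivativeFun F = Q * F)
    (hG : PowerSeries.derivativeFun G = Q * G) : F = G := by
  apply PowerSeries.ext; intro n
  induction n using Nat.strong_induction_on with
  | _ n ih =>
    match n with
    | 0 => simpa [PowerSeries.coeff_zero_eq_constantCoeff] using h0
    | n+1 =>
      have hF' := congrArg (PowerSeries.coeff n) hF
      have hG' := congrArg (PowerSeries.coeff n) hG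
      rw [show ∀ (f : PowerSeries Lam) (n : ℕ), PowerSeries.coeff n f.derivativeFun = PowerSeries.coeff (n+1) f * (n+1) from PowerSeries.coeff_derivative, PowerSeries.coeff_mul] at hF' hG'
      have hsum : ∑ p ∈ Finset.HasAntidiagonal.antidiagonal n,
            PowerSeries.coeff p.1 Q * PowerSeries.coeff p.2 F
          = ∑ p ∈ Finset.HasAntidiagonal.antidiagonal n,
            PowerSeries.coeff p.1 Q * PowerSeries.coeff p.2 G := by
        refine Finset.sum_congr rfl fun p hp => ?_
        have h2 : p.2 ≤ n := Finset.HasAntidiagonal.antidiagonal.snd_le hp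
        rw [ih p.2 (by omega)]
      have hcan : (PowerSeries.coeff (n+1) F) * ((n:Lam)+1)
          = (PowerSeries.coeff (n+1) G) * ((n:Lam)+1) := by
        rw [hF', hG', hsum]
      have hne : ((n:Lam)+1) ≠ 0 := by
        exact_mod_cast (Nat.cast_ne_zero (R := Lam)).mpr (Nat.succ_ne_zero n)
      exact mul_right_cancel₀ hne hcan

/-- the convolution identity `∑ h'_i h_{n-i} = q₁^n h_n`, from the ODEs -/
lemma conv (h h' : ℕ → Lam) (hh0 : h 0 = 1) (hh'0 : h' 0 = 1)
    (hgen : PowerSeries.derivativeFun (PowerSeries.mk h) =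
      (PowerSeries.mk fun t => pp (t + 1)) * PowerSeries.mk h)
    (hgen' : PowerSeries.derivativeFun (PowerSeries.mk h') =
      (PowerSeries.mk fun t => pp' (t + 1)) * PowerSeries.mk h') (n : ℕ) :
    ∑ i ∈ Finset.range (n+1), h' i * h (n-i) = MvPolynomial.C (q₁ ^ n) * h n := by
  have key : PowerSeries.mk h' * PowerSeries.mk h
      = PowerSeries.mk (fun k => MvPolynomial.C (q₁ ^ k) * h k) := by
    apply ode_unique (PowerSeries.mk fun k => MvPolynomial.C (q₁ ^ (k+1)) * pp (k+1))
    · simp [hh0, hh'0]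
    · rw [PowerSeries.derivativeFun_mul, hgen, hgen']
      have hQ : (PowerSeries.mk fun t => pp' (t+1)) + (PowerSeries.mk fun t => pp (t+1))
          = PowerSeries.mk fun k => MvPolynomial.C (q₁ ^ (k+1)) * pp (k+1) := by
        apply PowerSeries.ext; intro k
        simp only [map_add, PowerSeries.coeff_mk, pp', map_sub, map_one]
        ring
      rw [← hQ]; simp only [smul_eq_mul]; ring
    · apply PowerSeries.ext; intro k
      rw [show ∀ (f : PowerSeries Lam) (n : ℕ), PowerSeries.coeff n f.derivativeFun = PowerSeries.coeff (n+1) f * (n+1) from PowerSeries.coeff_derivative, PowerSeries.coeff_mk, PowerSeries.coeff_mul]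
      have hg := congrArg (PowerSeries.coeff k) hgen
      rw [show ∀ (f : PowerSeries Lam) (n : ℕ), PowerSeries.coeff n f.derivativeFun = PowerSeries.coeff (n+1) f * (n+1) from PowerSeries.coeff_derivative, PowerSeries.coeff_mul] at hg
      calc MvPolynomial.C (q₁ ^ (k+1)) * h (k+1) * ((k:Lam)+1)
          = MvPolynomial.C (q₁ ^ (k+1)) * (h (k+1) * ((k:Lam)+1)) := by ring
        _ = MvPolynomial.C (q₁ ^ (k+1)) * ∑ p ∈ Finset.HasAntidiagonal.antidiagonal k,
              (PowerSeries.coeff p.1) (PowerSeries.mk fun t => pp (t+1))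
              * (PowerSeries.coeff p.2) (PowerSeries.mk h) := by
            rw [← hg]; rw [PowerSeries.coeff_mk]
        _ = ∑ p ∈ Finset.HasAntidiagonal.antidiagonal k,
              (PowerSeries.coeff p.1)
                (PowerSeries.mk fun t => MvPolynomial.C (q₁ ^ (t+1)) * pp (t+1))
              * (PowerSeries.coeff p.2)
                (PowerSeries.mk fun j => MvPolynomial.C (q₁ ^ j) * h j) := by
            rw [Finset.mul_sum]
            refine Finset.sum_congr rfl fun p hp => ?_
            have hpk : p.1 + p.2 = k := Finset.HasAntidiagonal.mem_antidiagonal.mp hp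
            simp only [PowerSeries.coeff_mk]
            rw [show (q₁ ^ (k+1) : K1) = q₁ ^ (p.1+1) * q₁ ^ p.2 from by
              rw [← pow_add]; congr 1; omega, map_mul]
            ring
  have := congrArg (PowerSeries.coeff n) key
  rw [PowerSeries.coeff_mul, PowerSeries.coeff_mk,
    Finset.Nat.sum_antidiagonal_eq_sum_range_succ_mk] at this
  simpa using this

/-- the weight of a binary string -/
def wtf {n : ℕ} (ε : Fin n → Bool) : ℕ :=
  ∑ s ∈ Finset.univ.filter (fun s : Fin n => ε s = false), ((s : ℕ) + 1)

lemma wtf_snoc {m : ℕ} (ε : Fin m → Bool) (c : Bool) :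
    wtf (Fin.snoc ε c) = wtf ε + if c = false then m + 1 else 0 := by
  unfold wtf
  rw [Finset.sum_filter, Finset.sum_filter, Fin.sum_univ_castSucc]
  simp [Fin.snoc_castSucc, Fin.snoc_last]

lemma ofFn_snoc' {m : ℕ} (ε : Fin m → Bool) (c : Bool) :
    List.ofFn (Fin.snoc ε c) = List.ofFn ε ++ [c] := by
  rw [List.ofFn_succ']
  simp [Fin.snoc_castSucc, Fin.snoc_last, List.concat_eq_append]

lemma sum_snoc {M : Type*} [AddCommMonoid M] {m : ℕ} (f : (Fin (m+1) → Bool) → M) :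
    ∑ ε : Fin (m+1) → Bool, f ε
      = ∑ ε : Fin m → Bool, (f (Fin.snoc ε false) + f (Fin.snoc ε true)) := by
  rw [← (Fin.snocEquiv (fun _ => Bool)).sum_comp f, Fintype.sum_prod_type, Fintype.sum_bool]
  rw [← Finset.sum_add_distrib]
  refine Finset.sum_congr rfl fun ε _ => ?_
  simp [Fin.snocEquiv, add_comm]

/-- the partial weighted ribbon sums -/
noncomputable def Tf (S : List Bool → Lam) (m b : ℕ) : Lam :=
  ∑ ε : Fin m → Bool, MvPolynomial.C (q₁ ^ wtf ε) * S (List.ofFn ε ++ List.replicate b false)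

lemma Tf_step (S : List Bool → Lam) (h' : ℕ → Lam)
    (hS0 : ∀ t : ℕ, S (List.replicate t false) = h' (t + 1))
    (hSrule : ∀ ε ε' : List Bool,
      S ε * S ε' = S (ε ++ [false] ++ ε') + S (ε ++ [true] ++ ε')) (m b : ℕ) :
    Tf S (m+1) b = h' (b+1) * Tf S m 0
      + MvPolynomial.C (q₁ ^ (m+1) - 1) * Tf S m (b+1) := by
  unfold Tf
  rw [sum_snoc, Finset.mul_sum, Finset.mul_sum, ← Finset.sum_add_distrib]
  refine Finset.sum_congr rfl fun ε _ => ?_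
  rw [wtf_snoc, wtf_snoc, ofFn_snoc', ofFn_snoc']
  simp only [show (false = false) = True from by simp, show (true = false) = False from by simp,
    if_true, if_false, add_zero]
  have hr := hSrule (List.ofFn ε) (List.replicate b false)
  rw [hS0 b] at hr
  have h1 : List.ofFn ε ++ List.replicate 0 false = List.ofFn ε := by simp
  have h2 : List.ofFn ε ++ List.replicate (b+1) false
      = (List.ofFn ε ++ [false]) ++ List.replicate b false := by
    rw [List.replicate_succ, List.append_assoc]; rfl
  rw [h1, h2, pow_add, map_mul, map_sub, map_one]
  linear_combination (-(MvPolynomial.C (q₁ ^ wtf ε)) : Lam) * hr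

lemma Tf_closed (S : List Bool → Lam) (h h' : ℕ → Lam)
    (hh0 : h 0 = 1) (hh'0 : h' 0 = 1)
    (hS0 : ∀ t : ℕ, S (List.replicate t false) = h' (t + 1))
    (hSrule : ∀ ε ε' : List Bool,
      S ε * S ε' = S (ε ++ [false] ++ ε') + S (ε ++ [true] ++ ε'))
    (hconv : ∀ n : ℕ, ∑ i ∈ Finset.range (n+1), h' i * h (n-i)
      = MvPolynomial.C (q₁ ^ n) * h n) :
    ∀ m b : ℕ, Tf S m b = MvPolynomial.C (∏ k ∈ Finset.Icc 1 m, (q₁ ^ k - 1))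
      * ∑ i ∈ Finset.range (m+1), h' (b+i+1) * h (m-i) := by
  intro m
  induction m with
  | zero =>
    intro b
    unfold Tf
    rw [show (Finset.univ : Finset (Fin 0 → Bool)) = {fun i => i.elim0} from
      Finset.eq_singleton_iff_unique_mem.mpr ⟨Finset.mem_univ _,
        fun ε _ => funext fun i => i.elim0⟩, Finset.sum_singleton]
    have : wtf (fun i : Fin 0 => i.elim0) = 0 := by unfold wtf; simp
    rw [this]
    simp [hS0 b, hh0, Finset.Icc_eq_empty (by omega : ¬ (1:ℕ) ≤ 0)]
  | succ m ih =>
    intro b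
    rw [Tf_step S h' hS0 hSrule m b, ih 0, ih (b+1)]
    have hc := hconv (m+1)
    rw [Finset.sum_range_succ'] at hc
    simp only [Nat.succ_sub_succ, Nat.sub_zero, hh'0, one_mul] at hc
    have hc' : ∑ i ∈ Finset.range (m+1), h' (i+1) * h (m-i)
        = MvPolynomial.C (q₁ ^ (m+1)) * h (m+1) - h (m+1) := by
      rw [← hc]; ring
    have hz : ∀ i, (0:ℕ)+i+1 = i+1 := fun i => by omega
    simp only [hz] at *
    rw [hc']
    rw [Finset.prod_Icc_succ_top (by omega : 1 ≤ m+1)]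
    rw [Finset.sum_range_succ' (fun i => h' (b+i+1) * h (m+1-i)) (m+1)]
    simp only [Nat.succ_sub_succ, Nat.sub_zero]
    simp only [show ∀ i, b+(i+1)+1 = b+1+i+1 from fun i => by omega]
    rw [map_mul, map_sub, map_one]
    ring

lemma q_pow_sub_one_ne (j : ℕ) (hj : 1 ≤ j) : q₁ ^ j - 1 ≠ 0 := by
  have hinj : Function.Injective (algebraMap (MvPolynomial (Fin 2) ℚ) K1) :=
    IsFractionRing.injective _ _
  have heq : q₁ ^ j - 1
      = algebraMap (MvPolynomial (Fin 2) ℚ) K1 (MvPolynomial.X 0 ^ j - 1) := by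
    simp [q₁, map_pow, map_sub, map_one]
  rw [heq]
  intro h0
  have : (MvPolynomial.X (0 : Fin 2) ^ j - 1 : MvPolynomial (Fin 2) ℚ) = 0 :=
    hinj (by simpa using h0)
  have hcoeff := congrArg (MvPolynomial.coeff 0) this
  rw [MvPolynomial.coeff_sub, MvPolynomial.coeff_X_pow] at hcoeff
  rw [if_neg (by simp [Finsupp.single_eq_zero]; omega)] at hcoeff
  norm_num at hcoeff

lemma prod_ne (t : ℕ) : (∏ j ∈ Finset.Icc 1 t, (q₁ ^ j - 1)) ≠ 0 :=
  Finset.prod_ne_zero_iff.mpr fun j hj =>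
    q_pow_sub_one_ne j (Finset.mem_Icc.mp hj).1

theorem statement5
    (h h' : ℕ → Lam) (hh0 : h 0 = 1) (hh'0 : h' 0 = 1)
    (hgen : PowerSeries.derivativeFun (PowerSeries.mk h) =
      (PowerSeries.mk fun t => pp (t + 1)) * PowerSeries.mk h)
    (hgen' : PowerSeries.derivativeFun (PowerSeries.mk h') =
      (PowerSeries.mk fun t => pp' (t + 1)) * PowerSeries.mk h')
    (S : List Bool → Lam)
    (hS0 : ∀ t : ℕ, S (List.replicate t false) = h' (t + 1))
    (hSrule : ∀ ε ε' : List Bool,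
      S ε * S ε' = S (ε ++ [false] ++ ε') + S (ε ++ [true] ++ ε')) :
    ∀ t : ℕ, 1 ≤ t →
      h t = ∑ ε : Fin (t - 1) → Bool,
        MvPolynomial.C
          ((q₁ ^ (∑ s ∈ Finset.univ.filter (fun s : Fin (t-1) => ε s = false), ((s : ℕ) + 1))) /
            (∏ j ∈ Finset.Icc 1 t, (q₁ ^ j - 1)))
          * S (List.ofFn ε) := by
  intro t ht
  obtain ⟨m, rfl⟩ : ∃ m, t = m + 1 := ⟨t - 1, by omega⟩
  set D : K1 := ∏ j ∈ Finset.Icc 1 (m+1), (q₁ ^ j - 1) with hDdef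
  have hD : D ≠ 0 := prod_ne (m+1)
  have hTf : Tf S m 0 = MvPolynomial.C D * h (m+1) := by
    rw [Tf_closed S h h' hh0 hh'0 hS0 hSrule (conv h h' hh0 hh'0 hgen hgen') m 0]
    have hc := conv h h' hh0 hh'0 hgen hgen' (m+1)
    rw [Finset.sum_range_succ'] at hc
    simp only [Nat.succ_sub_succ, Nat.sub_zero, hh'0, one_mul] at hc
    have hz : ∀ i, (0:ℕ)+i+1 = i+1 := fun i => by omega
    simp only [hz]
    have hc' : ∑ i ∈ Finset.range (m+1), h' (i+1) * h (m-i)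
        = MvPolynomial.C (q₁ ^ (m+1)) * h (m+1) - h (m+1) := by
      rw [← hc]; ring
    rw [hc', hDdef, Finset.prod_Icc_succ_top (by omega : 1 ≤ m+1), map_mul,
      map_sub, map_one]
    ring
  have key : h (m+1) = MvPolynomial.C D⁻¹ * Tf S m 0 := by
    rw [hTf, ← mul_assoc, ← map_mul, inv_mul_cancel₀ hD, map_one, one_mul]
  have main : h (m+1) = ∑ ε : Fin m → Bool,
      MvPolynomial.C ((q₁ ^ wtf ε) / D) * S (List.ofFn ε) := by
    rw [key]
    unfold Tf
    rw [Finset.mul_sum]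
    refine Finset.sum_congr rfl fun ε _ => ?_
    rw [show List.ofFn ε ++ List.replicate 0 false = List.ofFn ε from by simp]
    rw [div_eq_mul_inv, map_mul]
    ring
  exact main

end
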